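/- For an integer N ≥ 3, let P be the cyclic random-walk transition matrix on ℤ/Nℤ, and let π⁰ be any probability distribution on ℤ/Nℤ (π⁰_i ≥ 0 and Σ_i π⁰_i = 1). Define πⁿ_j = Σ_i π⁰_i (P^n)(i,j). Then for every n ≥ 1 and every state j, |πⁿ_j − 1/N| ≤ ε_n, where ε_n = ((3^{N−1} − 1)/3^{N−1})^{(n/(N−1))−1} (real exponent). -/

import Mathlib

/-- The cyclic random-walk transition matrix on `ℤ/Nℤ`:
`P i j = 1/3` if `j ∈ {i−1, i, i+1}` and `0` otherwise. -/
noncomputable def cyclicRW (N : ℕ) : Matrix (ZMod N) (ZMod N) ℝ :=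
  fun i j => if j = i - 1 ∨ j = i ∨ j = i + 1 then 1 / 3 else 0

set_option linter.unusedSectionVars false
set_option maxHeartbeats 800000

section aux
variable {N : ℕ} [NeZero N]

lemma cyclicRW_nonneg (i j : ZMod N) : 0 ≤ cyclicRW N i j := by
  unfold cyclicRW; split <;> norm_num

lemma cyclicRW_pow_nonneg (k : ℕ) (i j : ZMod N) : 0 ≤ (cyclicRW N ^ k) i j := by
  induction k generalizing i j with
  | zero => simp [Matrix.one_apply]; split <;> norm_num
  | succ k ih =>
    rw [pow_succ, Matrix.mul_apply]
    exact Finset.sum_nonneg fun l _ => mul_nonneg (ih i l) (cyclicRW_nonneg l j)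

lemma cyclicRW_symm (i j : ZMod N) : cyclicRW N i j = cyclicRW N j i := by
  have h : (j = i - 1 ∨ j = i ∨ j = i + 1) ↔ (i = j - 1 ∨ i = j ∨ i = j + 1) := by
    constructor <;> rintro (rfl | rfl | rfl)
    · right; right; ring
    · right; left; ring
    · left; ring
    · right; right; ring
    · right; left; ring
    · left; ring
  simp only [cyclicRW, h]

lemma cyclicRW_row_sum (hN : 3 ≤ N) (i : ZMod N) : ∑ j, cyclicRW N i j = 1 := by
  haveI : Fact (1 < N) := ⟨by omega⟩
  have h1 : i - 1 ≠ i := by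
    intro h; rw [sub_eq_self] at h; exact one_ne_zero h
  have h2 : i - 1 ≠ i + 1 := by
    intro h
    have h2' : ((2 : ℕ) : ZMod N) = 0 := by push_cast; linear_combination -h
    rw [ZMod.natCast_eq_zero_iff] at h2'
    have := Nat.le_of_dvd (by norm_num) h2'
    omega
  have h3 : i ≠ i + 1 := by
    intro h; nth_rewrite 1 [← add_zero i] at h
    exact one_ne_zero (add_left_cancel h).symm
  have hmem : ∀ j : ZMod N, (j = i - 1 ∨ j = i ∨ j = i + 1) ↔
      j ∈ ({i - 1, i, i + 1} : Finset (ZMod N)) := by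
    intro j; simp
  calc ∑ j, cyclicRW N i j
      = ∑ j ∈ Finset.univ ∩ ({i - 1, i, i + 1} : Finset (ZMod N)), (1/3 : ℝ) := by
        rw [← Finset.sum_ite_mem]
        refine Finset.sum_congr rfl fun j _ => ?_
        simp only [cyclicRW, hmem]
    _ = 1 := by
        rw [Finset.univ_inter, Finset.sum_const]
        rw [show ({i - 1, i, i + 1} : Finset (ZMod N)).card = 3 by
          rw [Finset.card_insert_of_notMem (by simp [h1, h2]),
            Finset.card_insert_of_notMem (by simp [h3]), Finset.card_singleton]]
        norm_num

lemma cyclicRW_col_sum (hN : 3 ≤ N) (j : ZMod N) : ∑ i, cyclicRW N i j = 1 := by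
  simp_rw [fun i => cyclicRW_symm i j]
  exact cyclicRW_row_sum hN j

lemma cyclicRW_pow_row_sum (hN : 3 ≤ N) (k : ℕ) (i : ZMod N) :
    ∑ j, (cyclicRW N ^ k) i j = 1 := by
  induction k generalizing i with
  | zero => simp [Matrix.one_apply]
  | succ k ih =>
    simp_rw [pow_succ, Matrix.mul_apply]
    rw [Finset.sum_comm]
    calc ∑ l, ∑ j, (cyclicRW N ^ k) i l * cyclicRW N l j
        = ∑ l, (cyclicRW N ^ k) i l * ∑ j, cyclicRW N l j := by
          simp_rw [Finset.mul_sum]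
      _ = 1 := by simp_rw [cyclicRW_row_sum hN]; simpa using ih i

lemma cyclicRW_pow_col_sum (hN : 3 ≤ N) (k : ℕ) (j : ZMod N) :
    ∑ i, (cyclicRW N ^ k) i j = 1 := by
  induction k generalizing j with
  | zero => simp [Matrix.one_apply]
  | succ k ih =>
    simp_rw [pow_succ, Matrix.mul_apply]
    rw [Finset.sum_comm]
    calc ∑ l, ∑ i, (cyclicRW N ^ k) i l * cyclicRW N l j
        = ∑ l, (∑ i, (cyclicRW N ^ k) i l) * cyclicRW N l j := by
          simp_rw [Finset.sum_mul]
      _ = 1 := by simp_rw [ih]; simpa using cyclicRW_col_sum hN j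


lemma cyclicRW_reach (k : ℕ) (i : ZMod N) (d : ℕ) (hd : d ≤ k) :
    ((1:ℝ)/3) ^ k ≤ (cyclicRW N ^ k) i (i + (d : ZMod N)) := by
  induction k generalizing d with
  | zero =>
    interval_cases d
    simp [Matrix.one_apply]
  | succ k ih =>
    rw [show cyclicRW N ^ (k+1) = cyclicRW N ^ k * cyclicRW N from pow_succ _ _,
      Matrix.mul_apply]
    rcases Nat.lt_or_ge d (k + 1) with h | h
    · -- d ≤ k : go through l0 = i + d
      have hle : (cyclicRW N ^ k) i (i + (d : ZMod N)) *
          cyclicRW N (i + (d : ZMod N)) (i + (d : ZMod N)) ≤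
          ∑ l, (cyclicRW N ^ k) i l * cyclicRW N l (i + (d : ZMod N)) :=
        Finset.single_le_sum (f := fun l => (cyclicRW N ^ k) i l * cyclicRW N l (i + (d : ZMod N)))
          (fun l _ => mul_nonneg (cyclicRW_pow_nonneg k i l) (cyclicRW_nonneg _ _))
          (Finset.mem_univ _)
      refine le_trans ?_ hle
      have hP : cyclicRW N (i + (d : ZMod N)) (i + (d : ZMod N)) = 1/3 := by
        unfold cyclicRW; rw [if_pos (Or.inr (Or.inl rfl))]
      rw [hP]
      rw [show ((1:ℝ)/3)^(k+1) = ((1:ℝ)/3)^k * (1/3) from pow_succ _ _]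
      exact mul_le_mul_of_nonneg_right (ih d (by omega)) (by norm_num)
    · -- d = k + 1 : go through l0 = i + k
      have hd' : d = k + 1 := by omega
      subst hd'
      have hcast : i + ((k + 1 : ℕ) : ZMod N) = (i + (k : ZMod N)) + 1 := by
        push_cast; ring
      have hle : (cyclicRW N ^ k) i (i + (k : ZMod N)) *
          cyclicRW N (i + (k : ZMod N)) (i + ((k+1 : ℕ) : ZMod N)) ≤
          ∑ l, (cyclicRW N ^ k) i l * cyclicRW N l (i + ((k+1:ℕ) : ZMod N)) :=
        Finset.single_le_sum (f := fun l => (cyclicRW N ^ k) i l * cyclicRW N l (i + ((k+1:ℕ) : ZMod N)))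
          (fun l _ => mul_nonneg (cyclicRW_pow_nonneg k i l) (cyclicRW_nonneg _ _))
          (Finset.mem_univ _)
      refine le_trans ?_ hle
      have hP : cyclicRW N (i + (k : ZMod N)) (i + ((k+1:ℕ) : ZMod N)) = 1/3 := by
        unfold cyclicRW; rw [if_pos (Or.inr (Or.inr hcast))]
      rw [hP]
      rw [show ((1:ℝ)/3)^(k+1) = ((1:ℝ)/3)^k * (1/3) from pow_succ _ _]
      exact mul_le_mul_of_nonneg_right (ih k le_rfl) (by norm_num)

lemma cyclicRW_minor (i j : ZMod N) :
    ((1:ℝ)/3) ^ (N - 1) ≤ (cyclicRW N ^ (N - 1)) i j := by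
  have hval : j = i + (((j - i).val : ℕ) : ZMod N) := by
    rw [ZMod.natCast_val, ZMod.cast_id]; ring
  have hlt : (j - i).val ≤ N - 1 := by
    have := ZMod.val_lt (j - i); omega
  calc ((1:ℝ)/3) ^ (N-1) ≤ (cyclicRW N ^ (N-1)) i (i + (((j - i).val : ℕ) : ZMod N)) :=
        cyclicRW_reach (N-1) i _ hlt
    _ = (cyclicRW N ^ (N-1)) i j := by rw [← hval]

lemma cyclicRW_contract (hN : 3 ≤ N) (e : ZMod N → ℝ) (B : ℝ)
    (he : ∀ i, |e i| ≤ B) (hsum : ∑ i, e i = 0) (j : ZMod N) :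
    |∑ i, e i * (cyclicRW N ^ (N - 1)) i j| ≤ (1 - ((1:ℝ)/3) ^ (N-1)) * B := by
  set δ : ℝ := ((1:ℝ)/3) ^ (N-1) with hδ
  have hB : 0 ≤ B := le_trans (abs_nonneg _) (he j)
  have hδpos : 0 < δ := by positivity
  have key : ∑ i, e i * (cyclicRW N ^ (N-1)) i j
      = ∑ i, e i * ((cyclicRW N ^ (N-1)) i j - δ) := by
    simp only [mul_sub, Finset.sum_sub_distrib, ← Finset.sum_mul, hsum, zero_mul, sub_zero]
  rw [key]
  calc |∑ i, e i * ((cyclicRW N ^ (N-1)) i j - δ)|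
      ≤ ∑ i, |e i * ((cyclicRW N ^ (N-1)) i j - δ)| := Finset.abs_sum_le_sum_abs _ _
    _ = ∑ i, |e i| * ((cyclicRW N ^ (N-1)) i j - δ) := by
        refine Finset.sum_congr rfl fun i _ => ?_
        rw [abs_mul, abs_of_nonneg (sub_nonneg.mpr (cyclicRW_minor i j))]
    _ ≤ ∑ i, B * ((cyclicRW N ^ (N-1)) i j - δ) := by
        refine Finset.sum_le_sum fun i _ => ?_
        exact mul_le_mul_of_nonneg_right (he i) (sub_nonneg.mpr (cyclicRW_minor i j))
    _ = B * (1 - N * δ) := by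
        rw [← Finset.mul_sum, Finset.sum_sub_distrib, cyclicRW_pow_col_sum hN,
          Finset.sum_const, Finset.card_univ, ZMod.card, nsmul_eq_mul]
    _ ≤ (1 - δ) * B := by
        have h1 : (1 : ℝ) ≤ (N : ℝ) := by
          have : (1:ℕ) ≤ N := by omega
          exact_mod_cast this
        nlinarith [mul_nonneg (mul_nonneg hB hδpos.le) (sub_nonneg.mpr h1)]


end aux

/-- For `N ≥ 3` and any initial probability distribution `π⁰` on
`ℤ/Nℤ`, setting `πⁿ_j = Σ_i π⁰_i (P^n)(i,j)`, we have
`|πⁿ_j − 1/N| ≤ ((3^{N−1} − 1)/3^{N−1})^{(n/(N−1))−1}` (real exponent)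
for every `n ≥ 1` and every state `j`. -/
theorem cyclicRW_distribution_convergence (N : ℕ) [NeZero N] (hN : 3 ≤ N)
    (π0 : ZMod N → ℝ) (hπ0_nonneg : ∀ i, 0 ≤ π0 i) (hπ0_sum : ∑ i, π0 i = 1) :
    ∀ n : ℕ, 1 ≤ n → ∀ j : ZMod N,
      |(∑ i, π0 i * (cyclicRW N ^ n) i j) - 1 / (N : ℝ)| ≤
        (((3 : ℝ) ^ (N - 1) - 1) / (3 : ℝ) ^ (N - 1)) ^ ((n : ℝ) / ((N : ℝ) - 1) - 1) := by
  have hNR : (3 : ℝ) ≤ (N : ℝ) := by exact_mod_cast hN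
  set m : ℕ := N - 1 with hm
  have hm2 : 2 ≤ m := by omega
  set c : ℝ := 1 - ((1:ℝ)/3) ^ m with hc
  have hδpos : (0:ℝ) < ((1:ℝ)/3) ^ m := by positivity
  have hδlt : ((1:ℝ)/3) ^ m < 1 := by
    apply pow_lt_one₀ (by norm_num) (by norm_num); omega
  have hcpos : 0 < c := by simp only [hc]; linarith
  have hclt : c ≤ 1 := by simp only [hc]; linarith
  set π : ℕ → ZMod N → ℝ := fun n j => ∑ i, π0 i * (cyclicRW N ^ n) i j with hπ
  -- each π n is a probability vector
  have hπ_nonneg : ∀ n j, 0 ≤ π n j := fun n j =>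
    Finset.sum_nonneg fun i _ => mul_nonneg (hπ0_nonneg i) (cyclicRW_pow_nonneg n i j)
  have hπ_sum : ∀ n, ∑ j, π n j = 1 := by
    intro n
    simp only [hπ]
    rw [Finset.sum_comm]
    calc ∑ i, ∑ j, π0 i * (cyclicRW N ^ n) i j
        = ∑ i, π0 i * ∑ j, (cyclicRW N ^ n) i j := by simp_rw [Finset.mul_sum]
      _ = 1 := by simp_rw [cyclicRW_pow_row_sum hN]; simpa using hπ0_sum
  have hπ_le_one : ∀ n j, π n j ≤ 1 := by
    intro n j
    rw [← hπ_sum n]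
    exact Finset.single_le_sum (fun i _ => hπ_nonneg n i) (Finset.mem_univ j)
  have hNpos : (0:ℝ) < 1 / N := by positivity
  have hNle : (1:ℝ) / N ≤ 1 := by
    rw [div_le_one (by linarith)]; linarith
  have bound1 : ∀ n j, |π n j - 1 / N| ≤ 1 := by
    intro n j
    rw [abs_sub_le_iff]
    constructor
    · linarith [hπ_le_one n j]
    · linarith [hπ_nonneg n j]
  -- semigroup property
  have hsemi : ∀ n j, π (n + m) j = ∑ i, π n i * (cyclicRW N ^ m) i j := by
    intro n j
    simp only [hπ, pow_add, Matrix.mul_apply, Finset.mul_sum, Finset.sum_mul]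
    rw [Finset.sum_comm]
    refine Finset.sum_congr rfl fun l _ => ?_
    refine Finset.sum_congr rfl fun i _ => ?_
    ring
  -- error sums to zero
  have herr_sum : ∀ n, ∑ i, (π n i - 1 / N) = 0 := by
    intro n
    rw [Finset.sum_sub_distrib, hπ_sum, Finset.sum_const, Finset.card_univ, ZMod.card,
      nsmul_eq_mul]
    field_simp
    norm_num
  -- key induction
  have key : ∀ q n j, |π (q * m + n) j - 1 / N| ≤ c ^ q := by
    intro q
    induction q with
    | zero => intro n j; simpa using bound1 n j
    | succ q ih =>
      intro n j
      have heq : (q + 1) * m + n = (q * m + n) + m := by ring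
      rw [heq, hsemi]
      have hexp : ∑ i, π (q * m + n) i * (cyclicRW N ^ m) i j - 1 / N
          = ∑ i, (π (q * m + n) i - 1 / N) * (cyclicRW N ^ m) i j := by
        simp only [sub_mul, Finset.sum_sub_distrib]
        congr 1
        rw [← Finset.mul_sum, cyclicRW_pow_col_sum hN, mul_one]
      rw [hexp]
      calc |∑ i, (π (q * m + n) i - 1 / N) * (cyclicRW N ^ m) i j|
          ≤ (1 - ((1:ℝ)/3) ^ m) * c ^ q :=
            cyclicRW_contract hN _ _ (fun i => ih n i) (herr_sum _) j
        _ = c ^ (q + 1) := by rw [pow_succ]; ring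
  -- conclude
  intro n _ j
  obtain ⟨q, r, hr, hn⟩ : ∃ q r, r < m ∧ n = q * m + r :=
    ⟨n / m, n % m, Nat.mod_lt _ (by omega), by rw [mul_comm]; exact (Nat.div_add_mod n m).symm⟩
  have hb : |π n j - 1 / N| ≤ c ^ q := by rw [hn]; exact key q r j
  have hbase : ((3 : ℝ) ^ (N - 1) - 1) / (3 : ℝ) ^ (N - 1) = c := by
    rw [hc]
    have h3 : (0:ℝ) < (3:ℝ) ^ m := by positivity
    field_simp
    rw [← hm, mul_sub, mul_one, ← mul_pow]; norm_num
  rw [hbase]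
  refine le_trans hb ?_
  have hmR : ((m : ℕ) : ℝ) = (N : ℝ) - 1 := by
    rw [hm]; push_cast [Nat.cast_sub (by omega : 1 ≤ N)]; ring
  have hexple : (n : ℝ) / ((N : ℝ) - 1) - 1 ≤ (q : ℝ) := by
    rw [← hmR]
    have hmpos : (0:ℝ) < (m : ℝ) := by
      have : 0 < m := by omega
      exact_mod_cast this
    have hnR : (n : ℝ) = q * m + r := by exact_mod_cast hn
    have hrR : (r : ℝ) < m := by exact_mod_cast hr
    rw [sub_le_iff_le_add, div_le_iff₀ hmpos]
    nlinarith
  calc c ^ q = c ^ ((q : ℕ) : ℝ) := (Real.rpow_natCast c q).symm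
    _ ≤ c ^ ((n : ℝ) / ((N : ℝ) - 1) - 1) :=
        Real.rpow_le_rpow_of_exponent_ge hcpos hclt hexple
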